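/- In the canonical model M^c(X_0), for any group H ⊆ I, states s, s' ∈ S^c, and formula φ: if K_H φ ∈ ed(s) and s ∼^c_H s', then φ ∈ ed(s'). -/

import Mathlib

namespace DKH

/-- Groups of agents: subsets of the finite agent set `I = {i_0, …, i_{n-1}}`. -/
abbrev Grp (n : ℕ) := Finset (Fin n)

/-- The language DKH: φ ::= ⊤ | p | ¬φ | (φ∧φ) | K_G φ | Kh_G φ. -/
inductive Formula (P : Type) (n : ℕ) : Type
  | top  : Formula P n
  | atom : P → Formula P n
  | neg  : Formula P n → Formula P n
  | and  : Formula P n → Formula P n → Formula P n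
  | K    : Grp n → Formula P n → Formula P n
  | Kh   : Grp n → Formula P n → Formula P n

instance {P n} : Inhabited (Formula P n) := ⟨.top⟩

namespace Formula
/-- Defined implication φ → ψ := ¬(φ ∧ ¬ψ). -/
def imp {P n} (φ ψ : Formula P n) : Formula P n := .neg (φ.and ψ.neg)
/-- Defined falsum ⊥ := ¬⊤. -/
def bot {P : Type} {n : ℕ} : Formula P n := .neg .top
end Formula

/-- A model ⟨S, {∼_i}, {A_G}, {→_a}, V⟩. -/
structure KhModel (P : Type) (n : ℕ) where
  State : Type
  Act : Type
  sim : Fin n → State → State → Prop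
  sim_equiv : ∀ i, Equivalence (sim i)
  A : Grp n → Set Act
  A_empty : A ∅ = ∅
  A_disj : ∀ G H : Grp n, G ⊂ H → A G ∩ A H = ∅
  tr : Act → State → State → Prop
  V : P → Set State

/-- Distributed indistinguishability: s ∼_G t iff s ∼_i t for every i ∈ G. -/
def gsim {P n} (M : KhModel P n) (G : Grp n) (s t : M.State) : Prop :=
  ∀ i ∈ G, M.sim i s t

/-- Distributed actions: atomic group actions, or joint tuples ⟨d_0,…,d_k⟩. -/
inductive DAct (Act : Type) : Type
  | atom : Act → DAct Act
  | joint : List (DAct Act) → DAct Act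

mutual
/-- Distributed transition relation: →_{⟨d_0,…,d_k⟩} = ⋂_j →_{d_j}. -/
def dtr {Act State : Type} (tr : Act → State → State → Prop) :
    DAct Act → State → State → Prop
  | .atom a, s, t => tr a s t
  | .joint ds, s, t => dtrList tr ds s t

def dtrList {Act State : Type} (tr : Act → State → State → Prop) :
    List (DAct Act) → State → State → Prop
  | [], _, _ => True
  | d :: ds, s, t => dtr tr d s t ∧ dtrList tr ds s t
end

/-- `Gs` is a partial partition of `G`: a family of nonempty, pairwise disjoint
blocks, all included in `G` (i.e. a partition of a subset of `G`). -/
def PartialPartition {n : ℕ} (G : Grp n) (Gs : List (Grp n)) : Prop :=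
  (∀ B ∈ Gs, B ≠ ∅) ∧ Gs.Pairwise (fun B C => Disjoint B C) ∧ (∀ B ∈ Gs, B ⊆ G)

/-- The fixed ordering on mutually disjoint nonempty groups: G ≺ H iff the
minimal index of an agent in G is below that of H. -/
def grpLt {n : ℕ} (B C : Grp n) : Prop := B.min < C.min

/-- Membership in the set A*_G of distributed actions of group G:
the closure of A^+_G = ⋃_{G'⊆G} A_{G'} under forming joint actions
⟨d_0,…,d_k⟩ ∈ A*_{G_0} × ⋯ × A*_{G_k} for non-trivial partial partitions
{G_0,…,G_k} of G listed in the fixed order ≺. -/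
inductive star {n : ℕ} {Act : Type} (A : Grp n → Set Act) : Grp n → DAct Act → Prop
  | base {G G' : Grp n} {a : Act} :
      G' ⊆ G → a ∈ A G' → star A G (.atom a)
  | joint {G : Grp n} {Gs : List (Grp n)} {ds : List (DAct Act)} :
      2 ≤ Gs.length → PartialPartition G Gs → Gs.Chain' grpLt →
      List.Forall₂ (star A) Gs ds → star A G (.joint ds)

/-- Membership in A^+_G = ⋃_{G'⊆G} A_{G'} (as a set of distributed actions). -/
def inAplus {n : ℕ} {Act : Type} (A : Grp n → Set Act) (G : Grp n) (d : DAct Act) : Prop :=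
  ∃ G' : Grp n, G' ⊆ G ∧ ∃ a ∈ A G', d = .atom a

/-- d is executable on X if every s ∈ X has a d-successor. -/
def ExecutableOn {P n} (M : KhModel P n) (d : DAct M.Act) (X : Set M.State) : Prop :=
  ∀ s ∈ X, ∃ t, dtr M.tr d s t

/-- A strategy of group G: a partial function from ∼_G-equivalence classes to
A*_G such that the prescribed action is executable on the class. -/
structure Strategy {P n} (M : KhModel P n) (G : Grp n) where
  act : M.State → Option (DAct M.Act)
  uniform : ∀ s t, gsim M G s t → act s = act t
  mem_star : ∀ s d, act s = some d → star M.A G d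
  exec : ∀ s d, act s = some d → ∀ t, gsim M G s t → ∃ u, dtr M.tr d t u

/-- One step of an execution: [s]_G →_{σ([s]_G)} [t]_G. -/
def stepRel {P n} {M : KhModel P n} {G : Grp n} (σ : Strategy M G) (s t : M.State) : Prop :=
  ∃ d, σ.act s = some d ∧ ∃ u v, gsim M G s u ∧ gsim M G t v ∧ dtr M.tr d u v

/-- Leaf-nodes of the finite complete executions of σ starting from [s]_G,
as a ∼_G-closed set of states. -/
def CELeaf {P n} {M : KhModel P n} {G : Grp n} (σ : Strategy M G) (s : M.State) :
    Set M.State :=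
  {t | ∃ (m : ℕ) (f : ℕ → M.State), gsim M G s (f 0) ∧
    (∀ j < m, stepRel σ (f j) (f (j+1))) ∧ σ.act (f m) = none ∧ gsim M G (f m) t}

/-- There is an infinite (hence complete) execution of σ starting from [s]_G. -/
def InfiniteFrom {P n} {M : KhModel P n} {G : Grp n} (σ : Strategy M G) (s : M.State) : Prop :=
  ∃ f : ℕ → M.State, gsim M G s (f 0) ∧ ∀ j, stepRel σ (f j) (f (j+1))

/-- Inner-nodes of the complete executions of σ starting from [s]_G,
as a ∼_G-closed set of states. -/
def CEInner {P n} {M : KhModel P n} {G : Grp n} (σ : Strategy M G) (s : M.State) :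
    Set M.State :=
  {t | (∃ (m : ℕ) (f : ℕ → M.State), gsim M G s (f 0) ∧
          (∀ j < m, stepRel σ (f j) (f (j+1))) ∧ σ.act (f m) = none ∧
          ∃ j < m, gsim M G (f j) t) ∨
       (∃ f : ℕ → M.State, gsim M G s (f 0) ∧
          (∀ j, stepRel σ (f j) (f (j+1))) ∧ ∃ j, gsim M G (f j) t)}

/-- Truth at a pointed model. -/
def Sat {P n} (M : KhModel P n) : M.State → Formula P n → Prop
  | _, .top => True
  | s, .atom p => s ∈ M.V p
  | s, .neg φ => ¬ Sat M s φ
  | s, .and φ ψ => Sat M s φ ∧ Sat M s ψ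
  | s, .K G φ => ∀ t, gsim M G s t → Sat M t φ
  | s, .Kh G φ => ∃ σ : Strategy M G,
      (∀ t ∈ CELeaf σ s, Sat M t φ) ∧ ¬ InfiniteFrom σ s

/-- Boolean evaluation treating ⊤, ¬, ∧ as connectives and everything else
as atoms; used to define propositional tautologies. -/
def beval {P n} (v : Formula P n → Bool) : Formula P n → Bool
  | .top => true
  | .atom p => v (.atom p)
  | .neg φ => !(beval v φ)
  | .and φ ψ => beval v φ && beval v ψ
  | .K G φ => v (.K G φ)
  | .Kh G φ => v (.Kh G φ)

/-- Instances of propositional tautologies. -/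
def IsTaut {P n} (φ : Formula P n) : Prop := ∀ v, beval v φ = true

/-- The proof system SDKH. -/
inductive Provable {P : Type} {n : ℕ} : Formula P n → Prop
  | taut {φ} : IsTaut φ → Provable φ
  | distK {G : Grp n} {φ ψ} :
      Provable (((Formula.K G φ).and (Formula.K G (φ.imp ψ))).imp (Formula.K G ψ))
  | axT {G : Grp n} {φ} : Provable ((Formula.K G φ).imp φ)
  | ax4 {G : Grp n} {φ} : Provable ((Formula.K G φ).imp (Formula.K G (Formula.K G φ)))
  | ax5 {G : Grp n} {φ} :
      Provable ((Formula.neg (Formula.K G φ)).imp (Formula.K G (Formula.neg (Formula.K G φ))))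
  | axKMono {G H : Grp n} {φ} : G ⊆ H → Provable ((Formula.K G φ).imp (Formula.K H φ))
  | axKhMono {G H : Grp n} {φ} : G ⊆ H → Provable ((Formula.Kh G φ).imp (Formula.Kh H φ))
  | axKtoKh {G : Grp n} {φ} : Provable ((Formula.K G φ).imp (Formula.Kh G φ))
  | axEmpKhtoK {φ} : Provable ((Formula.Kh ∅ φ).imp (Formula.K ∅ φ))
  | axKhtoKKh {G : Grp n} {φ} : Provable ((Formula.Kh G φ).imp (Formula.K G (Formula.Kh G φ)))
  | axEmpMono {G : Grp n} {φ ψ} :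
      Provable ((Formula.K ∅ (φ.imp ψ)).imp (Formula.K ∅ ((Formula.Kh G φ).imp (Formula.Kh G ψ))))
  | axKhbot {G : Grp n} : Provable ((Formula.Kh G Formula.bot).imp Formula.bot)
  | axKhtoKhK {G : Grp n} {φ} : Provable ((Formula.Kh G φ).imp (Formula.Kh G (Formula.K G φ)))
  | axKhKh {G : Grp n} {φ} : Provable ((Formula.Kh G (Formula.Kh G φ)).imp (Formula.Kh G φ))
  | mp {φ ψ} : Provable (φ.imp ψ) → Provable φ → Provable ψ
  | necK {G : Grp n} {φ} : Provable φ → Provable (Formula.K G φ)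

/-- Conjunction of a finite list of formulas. -/
def conj {P n} (L : List (Formula P n)) : Formula P n := L.foldr Formula.and Formula.top

/-- SDKH-consistency of a set of formulas. -/
def Consistent {P n} (X : Set (Formula P n)) : Prop :=
  ¬ ∃ L : List (Formula P n), (∀ φ ∈ L, φ ∈ X) ∧ Provable ((conj L).imp Formula.bot)

/-- Maximal consistent sets. -/
def MCS {P n} (X : Set (Formula P n)) : Prop :=
  Consistent X ∧ ∀ φ ∉ X, ¬ Consistent (insert φ X)

/-! ### The canonical model -/

/-- One step ⟨(φ,G),H⟩X of a mixed sequence. -/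
structure CStep (P : Type) (n : ℕ) where
  fml : Formula P n
  G : Grp n
  H : Grp n
  X : Set (Formula P n)

instance {P n} : Inhabited (CStep P n) := ⟨⟨.top, ∅, ∅, ∅⟩⟩

/-- The conditions on a mixed sequence X_0⟨(φ_1,G_1),H_1⟩X_1⋯⟨(φ_n,G_n),H_n⟩X_n
(the previous MCS being `X`). -/
def goodFrom {P n} : Set (Formula P n) → List (CStep P n) → Prop
  | _, [] => True
  | X, c :: rest =>
      MCS c.X ∧ c.G ≠ ∅ ∧ (Formula.Kh c.G c.fml) ∈ X ∧ (Formula.K c.G c.fml) ∈ c.X ∧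
      (∀ ψ, (Formula.K c.H ψ) ∈ X → ψ ∈ c.X) ∧ goodFrom c.X rest

/-- The final MCS `ed(s)` of a mixed sequence. -/
def edOf {P n} (X0 : Set (Formula P n)) (l : List (CStep P n)) : Set (Formula P n) :=
  l.foldl (fun _ c => c.X) X0

/-- States of the canonical model: mixed sequences starting at X_0. -/
def CState {P : Type} {n : ℕ} (X0 : Set (Formula P n)) := {l : List (CStep P n) // goodFrom X0 l}

/-- Canonical epistemic relation ∼^c_i. -/
def csim {P n} (X0 : Set (Formula P n)) (i : Fin n) (s t : CState X0) : Prop :=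
  ∃ k : ℕ, k ≤ s.1.length ∧ k ≤ t.1.length ∧
    (∀ j < k, (s.1.getD j default).X = (t.1.getD j default).X ∧
              (s.1.getD j default).H = (t.1.getD j default).H) ∧
    (∀ j, k ≤ j → j < s.1.length → i ∈ (s.1.getD j default).H) ∧
    (∀ j, k ≤ j → j < t.1.length → i ∈ (t.1.getD j default).H)

/-- Canonical atomic actions: pairs (φ, G). -/
abbrev CAct (P : Type) (n : ℕ) := Formula P n × Grp n

/-- Canonical atomic action sets A^c_G = {(φ,G) : φ ∈ DKH} for G ≠ ∅, A^c_∅ = ∅. -/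
def cA {P : Type} {n : ℕ} (G : Grp n) : Set (CAct P n) := {a | a.2 = G ∧ G ≠ ∅}

/-- Canonical transition: s →_{(φ,G)} t iff t = s⟨(φ,G),G'⟩X for some G' and MCS X. -/
def ctr {P n} (X0 : Set (Formula P n)) (a : CAct P n) (s t : CState X0) : Prop :=
  ∃ (G' : Grp n) (Y : Set (Formula P n)), MCS Y ∧ t.1 = s.1 ++ [⟨a.1, a.2, G', Y⟩]

theorem csim_equiv {P n} (X0 : Set (Formula P n)) (i : Fin n) : Equivalence (csim X0 i) := by
  constructor
  · intro s
    exact ⟨s.1.length, le_rfl, le_rfl, fun j _ => ⟨rfl, rfl⟩,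
      fun j h1 h2 => absurd h2 (by omega), fun j h1 h2 => absurd h2 (by omega)⟩
  · rintro s t ⟨k, h1, h2, h3, h4, h5⟩
    exact ⟨k, h2, h1, fun j hj => ⟨(h3 j hj).1.symm, (h3 j hj).2.symm⟩, h5, h4⟩
  · rintro s t u ⟨k1, hk1s, hk1t, heq1, hs1, ht1⟩ ⟨k2, hk2t, hk2u, heq2, ht2, hu2⟩
    refine ⟨min k1 k2, le_trans (min_le_left _ _) hk1s, le_trans (min_le_right _ _) hk2u,
      ?_, ?_, ?_⟩
    · intro j hj
      have e1 := heq1 j (lt_of_lt_of_le hj (min_le_left _ _))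
      have e2 := heq2 j (lt_of_lt_of_le hj (min_le_right _ _))
      exact ⟨e1.1.trans e2.1, e1.2.trans e2.2⟩
    · intro j hj hjs
      by_cases h : k1 ≤ j
      · exact hs1 j h hjs
      · have hj2 : k2 ≤ j := by omega
        have hjt : j < t.1.length := by omega
        have := ht2 j hj2 hjt
        have e := (heq1 j (by omega)).2
        rw [e]; exact this
    · intro j hj hju
      by_cases h : k2 ≤ j
      · exact hu2 j h hju
      · have hj1 : k1 ≤ j := by omega
        have hjt : j < t.1.length := by omega
        have := ht1 j hj1 hjt
        have e := (heq2 j (by omega)).2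
        rw [← e]; exact this

theorem cA_empty {P : Type} {n : ℕ} : (cA (P := P) (n := n) ∅) = ∅ := by
  ext a; simp [cA]

theorem cA_disj {P : Type} {n : ℕ} (G H : Grp n) (h : G ⊂ H) :
    cA (P := P) (n := n) G ∩ cA H = ∅ := by
  ext a
  simp only [Set.mem_inter_iff, Set.mem_empty_iff_false, iff_false, cA, Set.mem_setOf_eq]
  rintro ⟨⟨rfl, -⟩, ⟨h2, -⟩⟩
  exact h.ne h2

/-- The canonical model M^c(X_0). -/
def canonicalModel {P : Type} {n : ℕ} (X0 : Set (Formula P n)) : KhModel P n where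
  State := CState X0
  Act := CAct P n
  sim := csim X0
  sim_equiv := csim_equiv X0
  A := cA
  A_empty := cA_empty
  A_disj := cA_disj
  tr := ctr X0
  V := fun p => {s : CState X0 | Formula.atom p ∈ edOf X0 s.1}



/-! ### Auxiliary lemmas for the proof of K_share -/

section Aux
variable {P : Type} {n : ℕ}

open Formula

lemma prov_imp_trans {α β γ : Formula P n} (h1 : Provable (α.imp β))
    (h2 : Provable (β.imp γ)) : Provable (α.imp γ) := by
  have t : Provable ((α.imp β).imp ((β.imp γ).imp (α.imp γ))) := by
    apply Provable.taut
    intro v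
    simp only [beval, Formula.imp]
    cases beval v α <;> cases beval v β <;> cases beval v γ <;> rfl
  exact (t.mp h1).mp h2

lemma prov_and_left {α β : Formula P n} : Provable ((α.and β).imp α) := by
  apply Provable.taut; intro v
  simp only [beval, Formula.imp]
  cases beval v α <;> cases beval v β <;> rfl

lemma prov_and_right {α β : Formula P n} : Provable ((α.and β).imp β) := by
  apply Provable.taut; intro v
  simp only [beval, Formula.imp]
  cases beval v α <;> cases beval v β <;> rfl

lemma prov_imp_and {α β γ : Formula P n} (h1 : Provable (α.imp β))
    (h2 : Provable (α.imp γ)) : Provable (α.imp (β.and γ)) := by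
  have t : Provable ((α.imp β).imp ((α.imp γ).imp (α.imp (β.and γ)))) := by
    apply Provable.taut; intro v
    simp only [beval, Formula.imp]
    cases beval v α <;> cases beval v β <;> cases beval v γ <;> rfl
  exact (t.mp h1).mp h2

lemma prov_conj_mem {L : List (Formula P n)} {χ : Formula P n} (h : χ ∈ L) :
    Provable ((conj L).imp χ) := by
  induction L with
  | nil => simp at h
  | cons a t ih =>
    rcases List.mem_cons.mp h with rfl | h
    · exact prov_and_left
    · exact prov_imp_trans prov_and_right (ih h)

lemma prov_conj_of_subset {L L' : List (Formula P n)} (h : ∀ χ ∈ L, χ ∈ L') :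
    Provable ((conj L').imp (conj L)) := by
  induction L with
  | nil =>
    apply Provable.taut; intro v
    simp [conj, List.foldr, beval, Formula.imp]
  | cons a t ih =>
    exact prov_imp_and (prov_conj_mem (h a (by simp)))
      (ih fun χ hχ => h χ (by simp [hχ]))

lemma mcs_mem_of_prov {X : Set (Formula P n)} (hX : MCS X)
    {L : List (Formula P n)} (hL : ∀ χ ∈ L, χ ∈ X) {ψ : Formula P n}
    (hp : Provable ((conj L).imp ψ)) : ψ ∈ X := by
  classical
  by_contra hψ
  obtain ⟨L₂, hL₂, hp₂⟩ := not_not.mp (fun hc => hX.2 ψ hψ hc)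
  set L₃ : List (Formula P n) := L₂.filter (fun χ => χ ≠ ψ) with hL₃def
  have hL₃X : ∀ χ ∈ L ++ L₃, χ ∈ X := by
    intro χ hχ
    rcases List.mem_append.mp hχ with h | h
    · exact hL χ h
    · have := List.mem_filter.mp h
      rcases hL₂ χ this.1 with h' | h'
      · exact absurd h' (by simpa using this.2)
      · exact h'
  have hM1 : Provable ((conj (L ++ L₃)).imp ψ) :=
    prov_imp_trans (prov_conj_of_subset (fun χ hχ => List.mem_append.mpr (Or.inl hχ))) hp
  have hM2 : Provable ((conj (L ++ L₃)).imp (conj L₃)) :=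
    prov_conj_of_subset (fun χ hχ => List.mem_append.mpr (Or.inr hχ))
  have hM3 : Provable ((conj (L ++ L₃)).imp (conj (ψ :: L₃))) := prov_imp_and hM1 hM2
  have hM4 : Provable ((conj (ψ :: L₃)).imp (conj L₂)) := by
    apply prov_conj_of_subset
    intro χ hχ
    by_cases hc : χ = ψ
    · simp [hc]
    · exact List.mem_cons.mpr (Or.inr (List.mem_filter.mpr ⟨hχ, by simpa using hc⟩))
  exact hX.1 ⟨L ++ L₃, hL₃X, prov_imp_trans (prov_imp_trans hM3 hM4) hp₂⟩

lemma mcs_of_prov {X : Set (Formula P n)} (hX : MCS X) {ψ : Formula P n}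
    (hp : Provable ψ) : ψ ∈ X := by
  refine mcs_mem_of_prov hX (L := []) (by simp) ?_
  have t : Provable (ψ.imp ((conj ([] : List (Formula P n))).imp ψ)) := by
    apply Provable.taut; intro v
    simp only [conj, List.foldr, beval, Formula.imp]
    cases beval v ψ <;> rfl
  exact t.mp hp

lemma mcs_closed {X : Set (Formula P n)} (hX : MCS X) {α ψ : Formula P n}
    (hα : α ∈ X) (hp : Provable (α.imp ψ)) : ψ ∈ X := by
  refine mcs_mem_of_prov hX (L := [α]) (by simpa using hα) ?_
  exact prov_imp_trans prov_and_left hp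

lemma mcs_neg {X : Set (Formula P n)} (hX : MCS X) {α : Formula P n}
    (hα : α ∉ X) : α.neg ∈ X := by
  classical
  obtain ⟨L₂, hL₂, hp₂⟩ := not_not.mp (fun hc => hX.2 α hα hc)
  set L₃ : List (Formula P n) := L₂.filter (fun χ => χ ≠ α) with hL₃def
  have hL₃X : ∀ χ ∈ L₃, χ ∈ X := by
    intro χ hχ
    have := List.mem_filter.mp hχ
    rcases hL₂ χ this.1 with h' | h'
    · exact absurd h' (by simpa using this.2)
    · exact h'
  refine mcs_mem_of_prov hX hL₃X (ψ := α.neg) ?_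
  have hM4 : Provable ((conj (α :: L₃)).imp (conj L₂)) := by
    apply prov_conj_of_subset
    intro χ hχ
    by_cases hc : χ = α
    · simp [hc]
    · exact List.mem_cons.mpr (Or.inr (List.mem_filter.mpr ⟨hχ, by simpa using hc⟩))
  have hM5 : Provable ((conj (α :: L₃)).imp Formula.bot) := prov_imp_trans hM4 hp₂
  have t : Provable (((conj (α :: L₃)).imp Formula.bot).imp ((conj L₃).imp α.neg)) := by
    apply Provable.taut; intro v
    simp only [conj, List.foldr, beval, Formula.imp, Formula.bot]
    cases beval v α <;> cases beval v (List.foldr Formula.and Formula.top L₃) <;> rfl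
  exact t.mp hM5

lemma mcs_not_both {X : Set (Formula P n)} (hX : MCS X) {α : Formula P n}
    (h1 : α ∈ X) (h2 : α.neg ∈ X) : False := by
  refine hX.1 ⟨[α, α.neg], by simp [h1, h2], ?_⟩
  apply Provable.taut; intro v
  simp only [conj, List.foldr, beval, Formula.imp, Formula.bot]
  cases beval v α <;> rfl

/-! ### Structure of the canonical model -/

lemma edOf_append (X : Set (Formula P n)) (l₁ l₂ : List (CStep P n)) :
    edOf X (l₁ ++ l₂) = edOf (edOf X l₁) l₂ := by
  simp [edOf, List.foldl_append]

lemma goodFrom_append {X : Set (Formula P n)} {l₁ l₂ : List (CStep P n)}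
    (h : goodFrom X (l₁ ++ l₂)) : goodFrom (edOf X l₁) l₂ := by
  induction l₁ generalizing X with
  | nil => simpa [edOf] using h
  | cons c t ih =>
    have : edOf X (c :: t) = edOf c.X t := by simp [edOf]
    rw [this]
    exact ih h.2.2.2.2.2

lemma mcs_edOf {X : Set (Formula P n)} {l : List (CStep P n)}
    (hX : MCS X) (h : goodFrom X l) : MCS (edOf X l) := by
  induction l generalizing X with
  | nil => simpa [edOf] using hX
  | cons c t ih =>
    have : edOf X (c :: t) = edOf c.X t := by simp [edOf]
    rw [this]
    exact ih h.1 h.2.2.2.2.2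

/-- transfer knowledge one step up -/
lemma k_step_up {X : Set (Formula P n)} {c : CStep P n} {H : Grp n} {φ : Formula P n}
    (hX : MCS X) (hstep : ∀ ψ, (Formula.K c.H ψ) ∈ X → ψ ∈ c.X)
    (hsub : H ⊆ c.H) (h : Formula.K H φ ∈ X) : Formula.K H φ ∈ c.X := by
  have h4 : Formula.K H (Formula.K H φ) ∈ X := mcs_closed hX h Provable.ax4
  have hm : Formula.K c.H (Formula.K H φ) ∈ X := mcs_closed hX h4 (Provable.axKMono hsub)
  exact hstep _ hm

/-- transfer knowledge one step down -/
lemma k_step_down {X : Set (Formula P n)} {c : CStep P n} {H : Grp n} {φ : Formula P n}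
    (hX : MCS X) (hcX : MCS c.X) (hstep : ∀ ψ, (Formula.K c.H ψ) ∈ X → ψ ∈ c.X)
    (hsub : H ⊆ c.H) (h : Formula.K H φ ∈ c.X) : Formula.K H φ ∈ X := by
  by_contra hn
  have h5 : Formula.K H ((Formula.K H φ).neg) ∈ X := mcs_closed hX (mcs_neg hX hn) Provable.ax5
  have hm : Formula.K c.H ((Formula.K H φ).neg) ∈ X := mcs_closed hX h5 (Provable.axKMono hsub)
  exact mcs_not_both hcX h (hstep _ hm)

lemma k_up {H : Grp n} {φ : Formula P n} :
    ∀ (X : Set (Formula P n)) (l : List (CStep P n)), goodFrom X l → MCS X →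
    (∀ c ∈ l, H ⊆ c.H) → Formula.K H φ ∈ X → Formula.K H φ ∈ edOf X l := by
  intro X l
  induction l generalizing X with
  | nil => intro _ _ _ h; simpa [edOf] using h
  | cons c t ih =>
    intro hg hX hsub h
    have e : edOf X (c :: t) = edOf c.X t := by simp [edOf]
    rw [e]
    exact ih c.X hg.2.2.2.2.2 hg.1 (fun d hd => hsub d (by simp [hd]))
      (k_step_up hX hg.2.2.2.2.1 (hsub c (by simp)) h)

lemma k_down {H : Grp n} {φ : Formula P n} :
    ∀ (X : Set (Formula P n)) (l : List (CStep P n)), goodFrom X l → MCS X →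
    (∀ c ∈ l, H ⊆ c.H) → Formula.K H φ ∈ edOf X l → Formula.K H φ ∈ X := by
  intro X l
  induction l generalizing X with
  | nil => intro _ _ _ h; simpa [edOf] using h
  | cons c t ih =>
    intro hg hX hsub h
    have e : edOf X (c :: t) = edOf c.X t := by simp [edOf]
    rw [e] at h
    have hc : Formula.K H φ ∈ c.X :=
      ih c.X hg.2.2.2.2.2 hg.1 (fun d hd => hsub d (by simp [hd])) h
    exact k_step_down hX hg.1 hg.2.2.2.2.1 (hsub c (by simp)) hc

lemma edOf_eq_getD {X : Set (Formula P n)} {l : List (CStep P n)} (h : l ≠ []) :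
    edOf X l = (l.getD (l.length - 1) default).X := by
  induction l generalizing X with
  | nil => exact absurd rfl h
  | cons c t ih =>
    by_cases ht : t = []
    · subst ht; simp [edOf]
    · have e : edOf X (c :: t) = edOf c.X t := by simp [edOf]
      rw [e, ih ht]
      have hlen : 0 < t.length := List.length_pos_iff.mpr ht
      have : (c :: t).length - 1 = (t.length - 1) + 1 := by simp; omega
      rw [this]
      simp [List.getD]

lemma goodFrom_prefix {X : Set (Formula P n)} {l₁ l₂ : List (CStep P n)}
    (h : goodFrom X (l₁ ++ l₂)) : goodFrom X l₁ := by
  induction l₁ generalizing X with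
  | nil => trivial
  | cons c t ih =>
    exact ⟨h.1, h.2.1, h.2.2.1, h.2.2.2.1, h.2.2.2.2.1, ih h.2.2.2.2.2⟩

lemma getD_take {α : Type _} [Inhabited α] (l : List α) (K j : ℕ) (h : j < K) :
    (l.take K).getD j default = l.getD j default := by
  simp [List.getD_eq_getElem?_getD, List.getElem?_take, h]

lemma getD_eq_getElem' {α : Type _} [Inhabited α] (l : List α) (j : ℕ) (h : j < l.length) :
    l.getD j default = l[j] := List.getD_eq_getElem l default h

end Aux

/-- In the canonical model, if K_H φ ∈ ed(s) and s ∼^c_H s',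
then φ ∈ ed(s'). -/
theorem K_share {P : Type} [Countable P] {n : ℕ}
    (X0 : Set (Formula P n)) (hX0 : MCS X0) (H : Grp n)
    (s s' : CState X0) (φ : Formula P n)
    (h1 : Formula.K H φ ∈ edOf X0 s.1)
    (h2 : ∀ i ∈ H, csim X0 i s s') :
    φ ∈ edOf X0 s'.1 := by
  classical
  have key : ∃ K, K ≤ s.1.length ∧ K ≤ s'.1.length ∧
      (∀ j, K ≤ j → j < s.1.length → H ⊆ (s.1.getD j default).H) ∧
      (∀ j, K ≤ j → j < s'.1.length → H ⊆ (s'.1.getD j default).H) ∧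
      edOf X0 (s.1.take K) = edOf X0 (s'.1.take K) := by
    rcases H.eq_empty_or_nonempty with rfl | hne
    · exact ⟨0, Nat.zero_le _, Nat.zero_le _,
        fun j _ _ => by simp, fun j _ _ => by simp, by simp⟩
    · choose k hk using h2
      set f : Fin n → ℕ := fun i => if h : i ∈ H then k i h else 0 with hf
      obtain ⟨i0, hi0H, hmax⟩ := H.exists_max_image f hne
      refine ⟨f i0, ?_, ?_, ?_, ?_, ?_⟩
      · have := (hk i0 hi0H).1; simpa [hf, hi0H] using this
      · have := (hk i0 hi0H).2.1; simpa [hf, hi0H] using this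
      · intro j hj hjlen i hi
        have hfi : f i ≤ j := le_trans (hmax i hi) hj
        have := (hk i hi).2.2.2.1 j (by simpa [hf, hi] using hfi) hjlen
        exact this
      · intro j hj hjlen i hi
        have hfi : f i ≤ j := le_trans (hmax i hi) hj
        have := (hk i hi).2.2.2.2 j (by simpa [hf, hi] using hfi) hjlen
        exact this
      · rcases Nat.eq_zero_or_pos (f i0) with h0 | h0
        · simp [h0, edOf]
        · have hks : f i0 ≤ s.1.length := by
            have := (hk i0 hi0H).1; simpa [hf, hi0H] using this
          have hks' : f i0 ≤ s'.1.length := by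
            have := (hk i0 hi0H).2.1; simpa [hf, hi0H] using this
          have hlen1 : (s.1.take (f i0)).length = f i0 := by simp [hks]
          have hlen2 : (s'.1.take (f i0)).length = f i0 := by simp [hks']
          have hne1 : s.1.take (f i0) ≠ [] := by
            intro hc; rw [hc] at hlen1; simp at hlen1; omega
          have hne2 : s'.1.take (f i0) ≠ [] := by
            intro hc; rw [hc] at hlen2; simp at hlen2; omega
          rw [edOf_eq_getD hne1, edOf_eq_getD hne2, hlen1, hlen2,
            getD_take _ _ _ (by omega), getD_take _ _ _ (by omega)]
          have := ((hk i0 hi0H).2.2.1 (f i0 - 1)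
            (by simpa [hf, hi0H] using Nat.sub_lt h0 one_pos)).1
          rw [this]
  obtain ⟨K, hKs, hKs', hcs, hcs', heq⟩ := key
  have hMtake : MCS (edOf X0 (s.1.take K)) := by
    refine mcs_edOf hX0 ?_
    have := s.2
    rw [← List.take_append_drop K s.1] at this
    exact goodFrom_prefix this
  have hgdrop_s : goodFrom (edOf X0 (s.1.take K)) (s.1.drop K) := by
    have := s.2
    rw [← List.take_append_drop K s.1] at this
    exact goodFrom_append this
  have hgdrop_s' : goodFrom (edOf X0 (s'.1.take K)) (s'.1.drop K) := by
    have := s'.2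
    rw [← List.take_append_drop K s'.1] at this
    exact goodFrom_append this
  have hsub_s : ∀ c ∈ s.1.drop K, H ⊆ c.H := by
    intro c hc
    obtain ⟨m, hm, hget⟩ := List.mem_iff_getElem.mp hc
    have hm' : K + m < s.1.length := by
      have : (s.1.drop K).length = s.1.length - K := by simp
      omega
    have hg' : (s.1.drop K)[m] = s.1[K + m] := List.getElem_drop
    have := hcs (K + m) (by omega) hm'
    rwa [getD_eq_getElem' _ _ hm', ← hg', hget] at this
  have hsub_s' : ∀ c ∈ s'.1.drop K, H ⊆ c.H := by
    intro c hc
    obtain ⟨m, hm, hget⟩ := List.mem_iff_getElem.mp hc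
    have hm' : K + m < s'.1.length := by
      have : (s'.1.drop K).length = s'.1.length - K := by simp
      omega
    have hg' : (s'.1.drop K)[m] = s'.1[K + m] := List.getElem_drop
    have := hcs' (K + m) (by omega) hm'
    rwa [getD_eq_getElem' _ _ hm', ← hg', hget] at this
  have h1' : Formula.K H φ ∈ edOf (edOf X0 (s.1.take K)) (s.1.drop K) := by
    rw [← edOf_append, List.take_append_drop]; exact h1
  have hdown : Formula.K H φ ∈ edOf X0 (s.1.take K) :=
    k_down _ _ hgdrop_s hMtake hsub_s h1'
  rw [heq] at hdown
  have hMtake' : MCS (edOf X0 (s'.1.take K)) := by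
    refine mcs_edOf hX0 ?_
    have := s'.2
    rw [← List.take_append_drop K s'.1] at this
    exact goodFrom_prefix this
  have hup : Formula.K H φ ∈ edOf (edOf X0 (s'.1.take K)) (s'.1.drop K) :=
    k_up _ _ hgdrop_s' hMtake' hsub_s' hdown
  rw [← edOf_append, List.take_append_drop] at hup
  exact mcs_closed (mcs_edOf hX0 s'.2) hup Provable.axT


end DKH
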